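/- Let F_q be a finite field with q elements of characteristic greater than 2, let P ⊆ F_q², and let d ∈ F_q with d ≠ 0. Define Q'_d(P) = {(x,y,z,w) ∈ P⁴ : B(x,z) = B(y,w), ‖x−y‖ = ‖z−w‖ = d} and Π_d(P) = {(x,y) ∈ P² : ‖x−y‖ = d}. Then |Q'_d(P)| ≤ |Π_d(P)|²/q + 2(q−1)·|Π_d(P)|. -/

import Mathlib

/-- The "norm" of a point of `F × F`: `‖(x₁,x₂)‖ = x₁² + x₂²`. -/
def nrm {F : Type*} [Field F] (x : F × F) : F := x.1 ^ 2 + x.2 ^ 2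

/-- The perpendicular bisector of `a` and `b`: the set of points equidistant from both. -/
def bisector {F : Type*} [Field F] (a b : F × F) : Set (F × F) :=
  {c | nrm (c - a) = nrm (c - b)}

/-- `Q'_d(P)`: quadruples `(x,y,z,w) ∈ P⁴` with `B(x,z) = B(y,w)` and
`‖x−y‖ = ‖z−w‖ = d`. -/
def Qd {F : Type*} [Field F] (P : Set (F × F)) (d : F) :
    Set ((F × F) × (F × F) × (F × F) × (F × F)) :=
  {t | t.1 ∈ P ∧ t.2.1 ∈ P ∧ t.2.2.1 ∈ P ∧ t.2.2.2 ∈ P ∧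
    bisector t.1 t.2.2.1 = bisector t.2.1 t.2.2.2 ∧
    nrm (t.1 - t.2.1) = d ∧ nrm (t.2.2.1 - t.2.2.2) = d}

/-- `Π_d(P)`: ordered pairs of points of `P` at distance `d`. -/
def Pid {F : Type*} [Field F] (P : Set (F × F)) (d : F) : Set ((F × F) × (F × F)) :=
  {p | p.1 ∈ P ∧ p.2 ∈ P ∧ nrm (p.1 - p.2) = d}

namespace FDE
attribute [local instance] Classical.propDecidable

variable {F : Type} [Field F]

def dot (a b : F × F) : F := a.1 * b.1 + a.2 * b.2

def NA (u u' : F × F) : F := u'.1 * u.1 - u.2 * u'.2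
def NB (u u' : F × F) : F := u.1 * u'.2 + u.2 * u'.1

noncomputable def nvec (d : F) (u u' : F × F) : F × F :=
  if NB u u' = 0 ∧ d - NA u u' = 0 then (d + NA u u', NB u u') else (NB u u', d - NA u u')

lemma NA_symm (u u' : F × F) : NA u u' = NA u' u := by simp [NA]; ring
lemma NB_symm (u u' : F × F) : NB u u' = NB u' u := by simp [NB]; ring

lemma nvec_symm (d : F) (u u' : F × F) : nvec d u u' = nvec d u' u := by
  simp [nvec, NA_symm u u', NB_symm u u']

lemma mem_bisector (a b c : F × F) :
    c ∈ bisector a b ↔ 2 * dot c (b - a) = nrm b - nrm a := by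
  simp only [bisector, Set.mem_setOf_eq, nrm, dot, Prod.fst_sub, Prod.snd_sub]
  constructor <;> intro h <;> linear_combination h

lemma key_orth (d : F) (h2 : (2:F) ≠ 0) (x y z w : F × F)
    (hB : bisector x z = bisector y w)
    (hxy : nrm (x - y) = d) :
    dot (nvec d (x - y) (z - w)) (z - x) = 0 := by
  by_cases hzx : z = x
  · subst hzx; simp [dot]
  obtain ⟨x1, x2⟩ := x
  obtain ⟨y1, y2⟩ := y
  obtain ⟨z1, z2⟩ := z
  obtain ⟨w1, w2⟩ := w
  have HH : ∀ c : F × F,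
      2 * dot c ((z1, z2) - (x1, x2)) = nrm (z1, z2) - nrm (x1, x2) ↔
      2 * dot c ((w1, w2) - (y1, y2)) = nrm (w1, w2) - nrm (y1, y2) := by
    intro c
    rw [← mem_bisector (x1,x2) (z1,z2) c, ← mem_bisector (y1,y2) (w1,w2) c, hB]
  have hv : ¬(z1 = x1 ∧ z2 = x2) := by
    intro ⟨h1, h2⟩; exact hzx (by simp [h1, h2])
  simp only [nrm, Prod.fst_sub, Prod.snd_sub] at hxy
  -- w ≠ y
  have hbne : ¬(w1 - y1 = 0 ∧ w2 - y2 = 0) := by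
    rintro ⟨hb1, hb2⟩
    have e1 : w1 = y1 := by linear_combination hb1
    have e2 : w2 = y2 := by linear_combination hb2
    subst e1; subst e2
    have hall : ∀ c : F × F, 2 * dot c ((z1, z2) - (x1, x2)) = nrm (z1, z2) - nrm (x1, x2) := by
      intro c
      refine (HH c).mpr ?_
      simp [dot, nrm, Prod.mk_sub_mk]
    have h00 := hall (0, 0)
    have h10 := hall (1, 0)
    have h01 := hall (0, 1)
    simp only [dot, nrm, Prod.mk_sub_mk] at h00 h10 h01
    have hz1 : z1 = x1 := by
      have : 2 * (z1 - x1) = 0 := by linear_combination h10 - h00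
      have := mul_eq_zero.mp this
      rcases this with h | h
      · exact absurd h h2
      · linear_combination h
    have hz2 : z2 = x2 := by
      have : 2 * (z2 - x2) = 0 := by linear_combination h01 - h00
      rcases mul_eq_zero.mp this with h | h
      · exact absurd h h2
      · linear_combination h
    exact hv ⟨hz1, hz2⟩
  -- parallel
  have hpar : (z1 - x1) * (w2 - y2) = (z2 - x2) * (w1 - y1) := by
    by_contra hndg
    have hδ : (z1 - x1) * (w2 - y2) - (z2 - x2) * (w1 - y1) ≠ 0 := sub_ne_zero.mpr hndg
    set s : F := nrm (z1, z2) - nrm (x1, x2) with hs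
    set t : F := nrm (w1, w2) - nrm (y1, y2) with ht
    set δ : F := (z1 - x1) * (w2 - y2) - (z2 - x2) * (w1 - y1) with hδdef
    set c1 : F := (s * (w2 - y2) - (t + 1) * (z2 - x2)) / (2 * δ) with hc1
    set c2 : F := ((t + 1) * (z1 - x1) - s * (w1 - y1)) / (2 * δ) with hc2
    have hL : 2 * dot (c1, c2) ((z1, z2) - (x1, x2)) = s := by
      simp only [dot, Prod.mk_sub_mk, hc1, hc2]
      field_simp
      ring
    have hR := (HH (c1, c2)).mp hL
    have hR' : 2 * dot (c1, c2) ((w1, w2) - (y1, y2)) = t + 1 := by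
      simp only [dot, Prod.mk_sub_mk, hc1, hc2]
      field_simp
      ring
    have : (1 : F) = 0 := by linear_combination hR - hR'
    exact one_ne_zero this
  -- lambda
  obtain ⟨lam, hβ1, hβ2, hoff⟩ :
      ∃ lam : F, w1 - y1 = lam * (z1 - x1) ∧ w2 - y2 = lam * (z2 - x2) ∧
        nrm (w1, w2) - nrm (y1, y2) = lam * (nrm (z1, z2) - nrm (x1, x2)) := by
    have hv' : z1 - x1 ≠ 0 ∨ z2 - x2 ≠ 0 := by
      by_contra hcc
      push_neg at hcc
      exact hv ⟨by linear_combination hcc.1, by linear_combination hcc.2⟩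
    set s : F := nrm (z1, z2) - nrm (x1, x2) with hs
    rcases hv' with hv1 | hv2
    · refine ⟨(w1 - y1) / (z1 - x1), by field_simp, ?_, ?_⟩
      · field_simp
        linear_combination hpar
      · have hL : 2 * dot (s / (2 * (z1 - x1)), 0) ((z1, z2) - (x1, x2)) = s := by
          simp only [dot, Prod.mk_sub_mk]
          field_simp
          ring
        have hR := (HH _).mp hL
        simp only [dot, Prod.mk_sub_mk] at hR
        field_simp at hR
        have h5 : 2 * ((nrm (w1, w2) - nrm (y1, y2)) * (z1 - x1)) =
            2 * ((w1 - y1) * s) := by linear_combination -2 * hR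
        have h6 := mul_left_cancel₀ h2 h5
        rw [div_mul_eq_mul_div, eq_div_iff hv1]
        linear_combination h6
    · refine ⟨(w2 - y2) / (z2 - x2), ?_, by field_simp, ?_⟩
      · field_simp
        linear_combination -hpar
      · have hL : 2 * dot (0, s / (2 * (z2 - x2))) ((z1, z2) - (x1, x2)) = s := by
          simp only [dot, Prod.mk_sub_mk]
          field_simp
          ring
        have hR := (HH _).mp hL
        simp only [dot, Prod.mk_sub_mk] at hR
        field_simp at hR
        have h5 : 2 * ((nrm (w1, w2) - nrm (y1, y2)) * (z2 - x2)) =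
            2 * ((w2 - y2) * s) := by linear_combination -2 * hR
        have h6 := mul_left_cancel₀ h2 h5
        rw [div_mul_eq_mul_div, eq_div_iff hv2]
        linear_combination h6
  have hlam : lam ≠ 0 := by
    intro h0
    rw [h0, zero_mul] at hβ1 hβ2
    exact hbne ⟨hβ1, hβ2⟩
  -- relation (ii)
  have hrel : 2 * ((x1 - y1) * (z1 - x1) + (x2 - y2) * (z2 - x2)) =
      (lam - 1) * ((z1 - x1) ^ 2 + (z2 - x2) ^ 2) := by
    simp only [nrm] at hoff
    have hcan : lam * (2 * ((x1 - y1) * (z1 - x1) + (x2 - y2) * (z2 - x2))) =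
        lam * ((lam - 1) * ((z1 - x1) ^ 2 + (z2 - x2) ^ 2)) := by
      linear_combination -hoff + (w1 + y1 + lam * (z1 - x1)) * hβ1 + (w2 + y2 + lam * (z2 - x2)) * hβ2
    exact mul_left_cancel₀ hlam hcan
  -- final goals
  have G1 : NA ((x1,x2) - (y1,y2)) ((z1,z2) - (w1,w2)) * (z1 - x1) +
      NB ((x1,x2) - (y1,y2)) ((z1,z2) - (w1,w2)) * (z2 - x2) = -(d * (z1 - x1)) := by
    simp only [NA, NB, Prod.mk_sub_mk]
    linear_combination (x1 - y1) * hrel - (z1 - x1) * hxy -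
      ((x1 - y1) * (z1 - x1) + (x2 - y2) * (z2 - x2)) * hβ1 +
      ((x2 - y2) * (z1 - x1) - (x1 - y1) * (z2 - x2)) * hβ2
  have G2 : NB ((x1,x2) - (y1,y2)) ((z1,z2) - (w1,w2)) * (z1 - x1) -
      NA ((x1,x2) - (y1,y2)) ((z1,z2) - (w1,w2)) * (z2 - x2) = -(d * (z2 - x2)) := by
    simp only [NA, NB, Prod.mk_sub_mk]
    linear_combination (x2 - y2) * hrel - (z2 - x2) * hxy +
      ((x1 - y1) * (z2 - x2) - (x2 - y2) * (z1 - x1)) * hβ1 -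
      ((x1 - y1) * (z1 - x1) + (x2 - y2) * (z2 - x2)) * hβ2
  unfold nvec
  split_ifs with hcond
  · simp only [dot, Prod.mk_sub_mk, Prod.fst, Prod.snd]
    linear_combination G1
  · simp only [dot, Prod.mk_sub_mk, Prod.fst, Prod.snd]
    linear_combination G2

section Counting

variable [Fintype F]

noncomputable def Cf (d : F) : Finset (F × F) := Finset.univ.filter (fun u => nrm u = d)

noncomputable def Af (P : Set (F × F)) (u : F × F) : Finset (F × F) :=
  Finset.univ.filter (fun x => x ∈ P ∧ x - u ∈ P)

noncomputable def fib (B : Finset (F × F)) (n : F × F) (i : F) : Finset (F × F) :=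
  B.filter (fun x => dot n x = i)

noncomputable def Pidf (P : Set (F × F)) (d : F) : Finset ((F × F) × (F × F)) :=
  Finset.univ.filter (fun p => p.1 ∈ P ∧ p.2 ∈ P ∧ nrm (p.1 - p.2) = d)

noncomputable def Sf (P : Set (F × F)) (d : F) :
    Finset ((F × F) × (F × F) × (F × F) × (F × F)) :=
  Finset.univ.filter (fun t => t.1 ∈ P ∧ t.2.1 ∈ P ∧ t.2.2.1 ∈ P ∧ t.2.2.2 ∈ P ∧
    nrm (t.1 - t.2.1) = d ∧ nrm (t.2.2.1 - t.2.2.2) = d ∧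
    dot (nvec d (t.1 - t.2.1) (t.2.2.1 - t.2.2.2)) (t.2.2.1 - t.1) = 0)

variable (P : Set (F × F)) (d : F)

lemma Pid_eq_coe : Pid P d = ↑(Pidf P d) := by
  ext p; simp [Pid, Pidf]

lemma Qd_ncard_le (h2 : (2:F) ≠ 0) : (Qd P d).ncard ≤ (Sf P d).card := by
  have hsub : Qd P d ⊆ ↑(Sf P d) := by
    rintro ⟨x, y, z, w⟩ ht
    simp only [Qd, Set.mem_setOf_eq] at ht
    obtain ⟨h1, h1', h3, h4, h5, h6, h7⟩ := ht
    simp only [Sf, Finset.coe_filter, Finset.mem_univ, Set.mem_setOf_eq, true_and]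
    exact ⟨h1, h1', h3, h4, h6, h7, key_orth d h2 x y z w h5 h6⟩
  calc (Qd P d).ncard ≤ ((Sf P d : Set _)).ncard :=
        Set.ncard_le_ncard hsub (Finset.finite_toSet _)
    _ = (Sf P d).card := Set.ncard_coe_finset _

lemma Pidf_card_eq : (Pidf P d).card = ∑ u ∈ Cf d, (Af P u).card := by
  rw [Finset.card_eq_sum_card_fiberwise (f := fun p => p.1 - p.2) (t := Cf d)
    (fun p hp => by
      simp only [Pidf, Finset.mem_coe, Finset.mem_filter, Finset.mem_univ, true_and] at hp
      simp [Cf, hp.2.2])]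
  refine Finset.sum_congr rfl (fun u hu => ?_)
  simp only [Cf, Finset.mem_filter, Finset.mem_univ, true_and] at hu
  apply Finset.card_bij (fun p _ => p.1)
  · intro p hp
    simp only [Finset.mem_filter, Pidf, Finset.mem_univ, true_and] at hp
    obtain ⟨⟨hp1, hp2, _⟩, hk⟩ := hp
    have hkey : p.2 = p.1 - u := by rw [← hk]; abel
    simp only [Af, Finset.mem_filter, Finset.mem_univ, true_and]
    exact ⟨hp1, by rwa [← hkey]⟩
  · intro p hp q hq hpq
    simp only [Finset.mem_filter] at hp hq
    have h1 : p.2 = p.1 - u := by rw [← hp.2]; abel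
    have h2 : q.2 = q.1 - u := by rw [← hq.2]; abel
    exact Prod.ext hpq (by rw [h1, h2, hpq])
  · intro x hx
    simp only [Af, Finset.mem_filter, Finset.mem_univ, true_and] at hx
    refine ⟨(x, x - u), ?_, rfl⟩
    simp only [Finset.mem_filter, Pidf, Finset.mem_univ, true_and]
    exact ⟨⟨hx.1, hx.2, by rw [sub_sub_cancel, hu]⟩, by abel⟩

omit [Fintype F] in
lemma dot_sub (n a b : F × F) : dot n (a - b) = dot n a - dot n b := by
  simp only [dot, Prod.fst_sub, Prod.snd_sub]; ring

lemma Sf_card_decomp : (Sf P d).card =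
    ∑ u ∈ Cf d, ∑ u' ∈ Cf d, ∑ i : F,
      (fib (Af P u) (nvec d u u') i).card * (fib (Af P u') (nvec d u u') i).card := by
  rw [Finset.card_eq_sum_card_fiberwise
    (f := fun t => (t.1 - t.2.1, t.2.2.1 - t.2.2.2)) (t := (Cf d) ×ˢ (Cf d))
    (fun t ht => by
      simp only [Sf, Finset.mem_coe, Finset.mem_filter, Finset.mem_univ, true_and] at ht
      simp only [Finset.mem_coe, Finset.mem_product, Cf, Finset.mem_filter, Finset.mem_univ, true_and]
      exact ⟨ht.2.2.2.2.1, ht.2.2.2.2.2.1⟩)]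
  rw [Finset.sum_product]
  refine Finset.sum_congr rfl (fun u hu => Finset.sum_congr rfl (fun u' hu' => ?_))
  simp only [Cf, Finset.mem_filter, Finset.mem_univ, true_and] at hu hu'
  rw [Finset.card_eq_sum_card_fiberwise
    (f := fun t => dot (nvec d u u') t.1) (t := Finset.univ)
    (fun t _ => Finset.mem_univ _)]
  refine Finset.sum_congr rfl (fun i _ => ?_)
  rw [← Finset.card_product]
  apply Finset.card_bij (fun t _ => (t.1, t.2.2.1))
  · intro t ht
    simp only [Finset.mem_filter, Sf, Finset.mem_univ, true_and, Prod.mk.injEq] at ht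
    obtain ⟨⟨⟨hx, hy, hz, hw, _, _, hdot⟩, hk1, hk2⟩, hi⟩ := ht
    have hky : t.2.1 = t.1 - u := by rw [← hk1]; abel
    have hkw : t.2.2.2 = t.2.2.1 - u' := by rw [← hk2]; abel
    simp only [Finset.mem_product, fib, Af, Finset.mem_filter, Finset.mem_univ, true_and]
    refine ⟨⟨⟨hx, by rwa [← hky]⟩, hi⟩, ⟨⟨hz, by rwa [← hkw]⟩, ?_⟩⟩
    rw [hk1, hk2, dot_sub] at hdot
    have : dot (nvec d u u') t.2.2.1 = dot (nvec d u u') t.1 := by linear_combination hdot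
    rw [this, hi]
  · intro t ht t' ht' htt
    simp only [Finset.mem_filter, Prod.mk.injEq] at ht ht' htt
    obtain ⟨hA, hB⟩ := htt
    have h1 : t.2.1 = t.1 - u := by rw [← ht.1.2.1]; abel
    have h2 : t'.2.1 = t'.1 - u := by rw [← ht'.1.2.1]; abel
    have h3 : t.2.2.2 = t.2.2.1 - u' := by rw [← ht.1.2.2]; abel
    have h4 : t'.2.2.2 = t'.2.2.1 - u' := by rw [← ht'.1.2.2]; abel
    refine Prod.ext hA (Prod.ext (by rw [h1, h2, hA]) (Prod.ext hB (by rw [h3, h4, hB])))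
  · rintro ⟨x, z⟩ hxz
    simp only [Finset.mem_product, fib, Af, Finset.mem_filter, Finset.mem_univ, true_and] at hxz
    obtain ⟨⟨⟨hx1, hx2⟩, hxi⟩, ⟨⟨hz1, hz2⟩, hzi⟩⟩ := hxz
    refine ⟨(x, x - u, z, z - u'), ?_, rfl⟩
    simp only [Finset.mem_filter, Sf, Finset.mem_univ, true_and, Prod.mk.injEq]
    refine ⟨⟨⟨hx1, hx2, hz1, hz2, ?_, ?_, ?_⟩, by abel, by abel⟩, hxi⟩
    · rw [sub_sub_cancel, hu]
    · rw [sub_sub_cancel, hu']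
    · rw [sub_sub_cancel, sub_sub_cancel, dot_sub, hxi, hzi, sub_self]

lemma sum_mul_le_main {ι : Type} [Fintype ι] [Nonempty ι] (a b : ι → ℝ) :
    ∑ i, a i * b i ≤ (∑ i, a i) * (∑ i, b i) / (Fintype.card ι : ℝ)
      + ((∑ i, (a i - (∑ j, a j) / (Fintype.card ι : ℝ)) ^ 2)
        + (∑ i, (b i - (∑ j, b j) / (Fintype.card ι : ℝ)) ^ 2)) / 2 := by
  have hq : (0:ℝ) < (Fintype.card ι : ℝ) := by
    exact_mod_cast Fintype.card_pos
  set q : ℝ := (Fintype.card ι : ℝ) with hqdef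
  set Sa := ∑ j, a j with hSa
  set Sb := ∑ j, b j with hSb
  have hid : ∑ i, (a i - Sa/q) * (b i - Sb/q) = (∑ i, a i * b i) - Sa*Sb/q := by
    have h1 : ∀ i ∈ Finset.univ,
        (a i - Sa/q) * (b i - Sb/q)
          = a i * b i - (Sb/q) * a i - (Sa/q) * b i + (Sa/q)*(Sb/q) := by
      intros; ring
    rw [Finset.sum_congr rfl h1]
    rw [Finset.sum_add_distrib, Finset.sum_sub_distrib, Finset.sum_sub_distrib,
      ← Finset.mul_sum, ← Finset.mul_sum, Finset.sum_const, Finset.card_univ, nsmul_eq_mul]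
    rw [← hqdef, ← hSa, ← hSb]
    field_simp
    ring
  have hpt : ∑ i, (a i - Sa/q) * (b i - Sb/q)
      ≤ ((∑ i, (a i - Sa/q) ^ 2) + (∑ i, (b i - Sb/q) ^ 2)) / 2 := by
    have h2 : ∑ i, (a i - Sa/q) * (b i - Sb/q)
        ≤ ∑ i, ((a i - Sa/q) ^ 2 + (b i - Sb/q) ^ 2) / 2 :=
      Finset.sum_le_sum (fun i _ => by nlinarith [sq_nonneg (a i - Sa/q - (b i - Sb/q))])
    calc ∑ i, (a i - Sa/q) * (b i - Sb/q)
        ≤ ∑ i, ((a i - Sa/q) ^ 2 + (b i - Sb/q) ^ 2) / 2 := h2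
      _ = ((∑ i, (a i - Sa/q) ^ 2) + (∑ i, (b i - Sb/q) ^ 2)) / 2 := by
          rw [← Finset.sum_div, Finset.sum_add_distrib]
  linarith [hid, hpt]

noncomputable def WB (B : Finset (F × F)) (n : F × F) : ℝ :=
  ∑ i : F, (((fib B n i).card : ℝ) - (B.card : ℝ) / (Fintype.card F : ℝ)) ^ 2

lemma WB_nonneg (B : Finset (F × F)) (n : F × F) : 0 ≤ WB B n :=
  Finset.sum_nonneg (fun i _ => sq_nonneg _)

lemma fib_sum (B : Finset (F × F)) (n : F × F) :
    ∑ i : F, (fib B n i).card = B.card :=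
  (Finset.card_eq_sum_card_fiberwise (f := fun x => dot n x) (t := Finset.univ)
    (fun x _ => Finset.mem_univ _)).symm

lemma pair_bound (B B' : Finset (F × F)) (n : F × F) :
    (∑ i : F, ((fib B n i).card * (fib B' n i).card : ℝ)) ≤
      (B.card : ℝ) * (B'.card : ℝ) / (Fintype.card F : ℝ) + (WB B n + WB B' n) / 2 := by
  have h := sum_mul_le_main (a := fun i => ((fib B n i).card : ℝ))
    (b := fun i => ((fib B' n i).card : ℝ))
  have ha : ∑ j : F, ((fib B n j).card : ℝ) = (B.card : ℝ) := by
    rw [← Nat.cast_sum]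
    exact_mod_cast congrArg (Nat.cast : ℕ → ℝ) (fib_sum B n)
  have hb : ∑ j : F, ((fib B' n j).card : ℝ) = (B'.card : ℝ) := by
    rw [← Nat.cast_sum]
    exact_mod_cast congrArg (Nat.cast : ℕ → ℝ) (fib_sum B' n)
  rw [ha, hb] at h
  simpa [WB] using h

lemma Sf_real_bound :
    ((Sf P d).card : ℝ) ≤
      (∑ u ∈ Cf d, ((Af P u).card : ℝ)) ^ 2 / (Fintype.card F : ℝ)
        + ∑ u ∈ Cf d, ∑ u' ∈ Cf d, WB (Af P u) (nvec d u u') := by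
  have hdec := Sf_card_decomp P d
  have hcast : ((Sf P d).card : ℝ) =
      ∑ u ∈ Cf d, ∑ u' ∈ Cf d, ∑ i : F,
        ((fib (Af P u) (nvec d u u') i).card * (fib (Af P u') (nvec d u u') i).card : ℝ) := by
    rw [hdec]; push_cast; rfl
  rw [hcast]
  have hstep : ∑ u ∈ Cf d, ∑ u' ∈ Cf d, ∑ i : F,
        ((fib (Af P u) (nvec d u u') i).card * (fib (Af P u') (nvec d u u') i).card : ℝ)
      ≤ ∑ u ∈ Cf d, ∑ u' ∈ Cf d,
          (((Af P u).card : ℝ) * ((Af P u').card : ℝ) / (Fintype.card F : ℝ)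
            + (WB (Af P u) (nvec d u u') + WB (Af P u') (nvec d u u')) / 2) := by
    refine Finset.sum_le_sum (fun u _ => Finset.sum_le_sum (fun u' _ => ?_))
    exact pair_bound (Af P u) (Af P u') (nvec d u u')
  refine hstep.trans ?_
  have e1 : ∑ u ∈ Cf d, ∑ u' ∈ Cf d,
      (((Af P u).card : ℝ) * ((Af P u').card : ℝ) / (Fintype.card F : ℝ)
        + (WB (Af P u) (nvec d u u') + WB (Af P u') (nvec d u u')) / 2)
      = (∑ u ∈ Cf d, ∑ u' ∈ Cf d,
          ((Af P u).card : ℝ) * ((Af P u').card : ℝ) / (Fintype.card F : ℝ))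
        + ((∑ u ∈ Cf d, ∑ u' ∈ Cf d, WB (Af P u) (nvec d u u'))
          + (∑ u ∈ Cf d, ∑ u' ∈ Cf d, WB (Af P u') (nvec d u u'))) / 2 := by
    have inner : ∀ u : F × F, ∑ u' ∈ Cf d,
        (((Af P u).card : ℝ) * ((Af P u').card : ℝ) / (Fintype.card F : ℝ)
          + (WB (Af P u) (nvec d u u') + WB (Af P u') (nvec d u u')) / 2)
        = (∑ u' ∈ Cf d, ((Af P u).card : ℝ) * ((Af P u').card : ℝ) / (Fintype.card F : ℝ))
          + ((∑ u' ∈ Cf d, WB (Af P u) (nvec d u u'))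
            + (∑ u' ∈ Cf d, WB (Af P u') (nvec d u u'))) / 2 := by
      intro u
      rw [Finset.sum_add_distrib]
      congr 1
      rw [← Finset.sum_div, Finset.sum_add_distrib]
    rw [Finset.sum_congr rfl (fun u _ => inner u)]
    rw [Finset.sum_add_distrib]
    congr 1
    rw [← Finset.sum_div, Finset.sum_add_distrib]
  rw [e1]
  have hsym : ∑ u ∈ Cf d, ∑ u' ∈ Cf d, WB (Af P u') (nvec d u u')
      = ∑ u ∈ Cf d, ∑ u' ∈ Cf d, WB (Af P u) (nvec d u u') := by
    rw [Finset.sum_comm]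
    refine Finset.sum_congr rfl (fun u _ => Finset.sum_congr rfl (fun u' _ => ?_))
    rw [nvec_symm]
  rw [hsym, add_self_div_two]
  have hmain : ∑ u ∈ Cf d, ∑ u' ∈ Cf d,
      ((Af P u).card : ℝ) * ((Af P u').card : ℝ) / (Fintype.card F : ℝ)
      = (∑ u ∈ Cf d, ((Af P u).card : ℝ)) ^ 2 / (Fintype.card F : ℝ) := by
    have e2 : ∀ u : F × F, ∑ u' ∈ Cf d,
        ((Af P u).card : ℝ) * ((Af P u').card : ℝ) / (Fintype.card F : ℝ)
        = ((Af P u).card : ℝ) * ((∑ u' ∈ Cf d, ((Af P u').card : ℝ)) / (Fintype.card F : ℝ)) := by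
      intro u
      rw [Finset.sum_div, Finset.mul_sum]
      refine Finset.sum_congr rfl (fun u' _ => by ring)
    calc ∑ u ∈ Cf d, ∑ u' ∈ Cf d,
          ((Af P u).card : ℝ) * ((Af P u').card : ℝ) / (Fintype.card F : ℝ)
        = ∑ u ∈ Cf d, ((Af P u).card : ℝ)
            * ((∑ u' ∈ Cf d, ((Af P u').card : ℝ)) / (Fintype.card F : ℝ)) :=
          Finset.sum_congr rfl (fun u _ => e2 u)
      _ = (∑ u ∈ Cf d, ((Af P u).card : ℝ))
            * ((∑ u' ∈ Cf d, ((Af P u').card : ℝ)) / (Fintype.card F : ℝ)) := by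
          rw [← Finset.sum_mul]
      _ = (∑ u ∈ Cf d, ((Af P u).card : ℝ)) ^ 2 / (Fintype.card F : ℝ) := by
          rw [sq]; ring
  rw [hmain]

-- scaling invariance of WB
lemma fib_scale (B : Finset (F × F)) (n : F × F) (c : F) (hc : c ≠ 0) (i : F) :
    fib B (c * n.1, c * n.2) (c * i) = fib B n i := by
  unfold fib
  apply Finset.filter_congr
  intro x _
  simp only [dot]
  constructor
  · intro h
    apply mul_left_cancel₀ hc
    linear_combination h
  · intro h
    linear_combination c * h

lemma WB_scale (B : Finset (F × F)) (n : F × F) (c : F) (hc : c ≠ 0) :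
    WB B (c * n.1, c * n.2) = WB B n := by
  unfold WB
  exact (Fintype.sum_bijective (fun i => c * i) (mulLeft_bijective₀ c hc)
    (fun i => (((fib B n i).card : ℝ) - (B.card : ℝ) / (Fintype.card F : ℝ)) ^ 2)
    (fun j => (((fib B (c * n.1, c * n.2) j).card : ℝ) - (B.card : ℝ) / (Fintype.card F : ℝ)) ^ 2)
    (fun i => by rw [fib_scale B n c hc i])).symm

noncomputable def nrmz (n : F × F) : F × F := if n.1 ≠ 0 then (1, n.2 / n.1) else ((0:F), (1:F))

lemma WB_nrmz (B : Finset (F × F)) (n : F × F) (hn : n ≠ 0) : WB B (nrmz n) = WB B n := by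
  unfold nrmz
  split_ifs with h
  · have he : n = (n.1 * (1:F), n.1 * (n.2 / n.1)) := by
      have : n.1 * (n.2 / n.1) = n.2 := by field_simp
      rw [this, mul_one]
    conv_rhs => rw [he]
    rw [WB_scale B (1, n.2 / n.1) n.1 h]
  · push_neg at h
    have h2 : n.2 ≠ 0 := by
      intro h2
      exact hn (Prod.ext h h2)
    have he : n = (n.2 * (0:F), n.2 * (1:F)) := by
      rw [mul_zero, mul_one]
      exact Prod.ext h rfl
    conv_rhs => rw [he]
    rw [WB_scale B (0, 1) n.2 h2]

lemma nrm_nrmz_ne (n : F × F) (h : nrm n ≠ 0) : nrm (nrmz n) ≠ 0 := by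
  unfold nrmz
  split_ifs with h1
  · intro h0
    apply h
    simp only [nrm] at h0 ⊢
    have : n.1 ^ 2 * ((1:F) ^ 2 + (n.2 / n.1) ^ 2) = n.1 ^ 2 + n.2 ^ 2 := by
      field_simp
    rw [← this, h0, mul_zero]
  · simp [nrm]

noncomputable def Dir : Finset (F × F) :=
  (Finset.univ.image (fun t : F => ((1:F), t))) ∪ {((0:F), (1:F))}

lemma nrmz_mem_Dir (n : F × F) : nrmz n ∈ Dir := by
  unfold nrmz
  split_ifs with h
  · exact Finset.mem_union_left _ (Finset.mem_image.mpr ⟨n.2 / n.1, Finset.mem_univ _, rfl⟩)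
  · exact Finset.mem_union_right _ (Finset.mem_singleton_self _)

lemma card_Dir : (Dir : Finset (F × F)).card = Fintype.card F + 1 := by
  unfold Dir
  rw [Finset.card_union_of_disjoint]
  · rw [Finset.card_image_of_injective _ (fun a b hab => by
      simpa using congrArg Prod.snd hab), Finset.card_univ, Finset.card_singleton]
  · simp only [Finset.disjoint_singleton_right, Finset.mem_image]
    rintro ⟨t, -, ht⟩
    exact one_ne_zero (congrArg Prod.fst ht)

-- properties of nvec for circle pairs
lemma circle (d : F) (u u' : F × F) (hu : nrm u = d) (hu' : nrm u' = d) :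
    NA u u' ^ 2 + NB u u' ^ 2 = d ^ 2 := by
  simp only [nrm] at hu hu'
  simp only [NA, NB]
  linear_combination (u'.1 ^ 2 + u'.2 ^ 2) * hu + d * hu'

lemma else_dA_ne {d : F} {u u' : F × F} (hc : NA u u' ^ 2 + NB u u' ^ 2 = d ^ 2)
    (h : ¬(NB u u' = 0 ∧ d - NA u u' = 0)) : d - NA u u' ≠ 0 := by
  intro h0
  apply h
  refine ⟨?_, h0⟩
  have hB2 : NB u u' ^ 2 = 0 := by
    linear_combination hc + (d + NA u u') * h0
  exact pow_eq_zero_iff (two_ne_zero) |>.mp hB2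

lemma nrm_nvec_ne (d : F) (h2 : (2:F) ≠ 0) (hd : d ≠ 0) (u u' : F × F)
    (hu : nrm u = d) (hu' : nrm u' = d) : nrm (nvec d u u') ≠ 0 := by
  have hc := circle d u u' hu hu'
  unfold nvec
  split_ifs with h
  · obtain ⟨hB0, hA0⟩ := h
    simp only [nrm]
    have hval : (d + NA u u') ^ 2 + (NB u u') ^ 2 = (2 * d) * (2 * d) := by
      linear_combination (-(NA u u' + 3 * d)) * hA0 + NB u u' * hB0
    rw [hval]
    exact mul_ne_zero (mul_ne_zero h2 hd) (mul_ne_zero h2 hd)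
  · have hAne := else_dA_ne hc h
    simp only [nrm]
    have hval : (NB u u') ^ 2 + (d - NA u u') ^ 2 = (2 * d) * (d - NA u u') := by
      linear_combination hc
    rw [hval]
    exact mul_ne_zero (mul_ne_zero h2 hd) hAne

lemma nvec_ne_zero (d : F) (h2 : (2:F) ≠ 0) (hd : d ≠ 0) (u u' : F × F)
    (hu : nrm u = d) (hu' : nrm u' = d) : nvec d u u' ≠ 0 := by
  intro h0
  apply nrm_nvec_ne d h2 hd u u' hu hu'
  rw [h0]
  simp [nrm]

lemma nrmz_parallel {a b : F × F} (h : nrmz a = nrmz b) : a.1 * b.2 = a.2 * b.1 := by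
  unfold nrmz at h
  split_ifs at h with h1 h2 h2
  · have h3 := congrArg Prod.snd h
    simp only at h3
    field_simp at h3
    linear_combination -h3
  · exact absurd (congrArg Prod.fst h) one_ne_zero
  · exact absurd (congrArg Prod.fst h).symm one_ne_zero
  · push_neg at h1 h2
    rw [h1, h2, zero_mul, mul_zero]

lemma nvec_inj (d : F) (h2 : (2:F) ≠ 0) (hd : d ≠ 0) (u u1 u2 : F × F)
    (hu : nrm u = d) (hc1' : nrm u1 = d) (hc2' : nrm u2 = d)
    (heq : nrmz (nvec d u u1) = nrmz (nvec d u u2)) : u1 = u2 := by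
  have hc1 := circle d u u1 hu hc1'
  have hc2 := circle d u u2 hu hc2'
  have hcross := nrmz_parallel heq
  have hAB : NA u u1 = NA u u2 ∧ NB u u1 = NB u u2 := by
    unfold nvec at hcross
    split_ifs at hcross with ha hb hb
    · exact ⟨by linear_combination hb.2 - ha.2, by rw [ha.1, hb.1]⟩
    · -- u1 branch then, u2 branch else
      exfalso
      have hne2 := else_dA_ne hc2 hb
      apply hne2
      -- hcross : (d + NA1) * (d - NA2) = NB1 * NB2 with NB1 = 0, d - NA1 = 0
      simp only at hcross
      have h2d : d + NA u u1 = 2 * d := by linear_combination - ha.2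
      rw [ha.1, zero_mul, h2d] at hcross
      rcases mul_eq_zero.mp hcross with h | h
      · exact absurd h (mul_ne_zero h2 hd)
      · exact h
    · exfalso
      have hne1 := else_dA_ne hc1 ha
      apply hne1
      simp only at hcross
      have h2d : d + NA u u2 = 2 * d := by linear_combination - hb.2
      rw [hb.1, mul_zero, h2d] at hcross
      rcases mul_eq_zero.mp hcross.symm with h | h
      · exact h
      · exact absurd h (mul_ne_zero h2 hd)
    · -- both else
      have hne1 := else_dA_ne hc1 ha
      have hne2 := else_dA_ne hc2 hb
      simp only at hcross
      -- hcross : NB1 * (d - NA2) = (d - NA1) * NB2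
      have key : (d - NA u u1) * (d - NA u u2) * (2 * d) *
          ((d - NA u u2) - (d - NA u u1)) = 0 := by
        linear_combination (NB u u1 * (d - NA u u2) + (d - NA u u1) * NB u u2) * hcross
          - (d - NA u u2) ^ 2 * hc1 + (d - NA u u1) ^ 2 * hc2
      have hnz : (d - NA u u1) * (d - NA u u2) * (2 * d) ≠ 0 :=
        mul_ne_zero (mul_ne_zero hne1 hne2) (mul_ne_zero h2 hd)
      have h5 : (d - NA u u2) - (d - NA u u1) = 0 := by
        rcases mul_eq_zero.mp key with h | h
        · exact absurd h hnz
        · exact h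
      have hA : NA u u1 = NA u u2 := by linear_combination h5
      refine ⟨hA, ?_⟩
      have h6 : NB u u1 * (d - NA u u2) = NB u u2 * (d - NA u u2) := by
        rw [hcross, hA]; ring
      exact mul_right_cancel₀ hne2 h6
  obtain ⟨hA, hB⟩ := hAB
  simp only [nrm] at hu
  have e11 : d * u1.1 = NA u u1 * u.1 + NB u u1 * u.2 := by
    simp only [NA, NB]; linear_combination -u1.1 * hu
  have e12 : d * u2.1 = NA u u2 * u.1 + NB u u2 * u.2 := by
    simp only [NA, NB]; linear_combination -u2.1 * hu
  have e21 : d * u1.2 = NB u u1 * u.1 - NA u u1 * u.2 := by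
    simp only [NA, NB]; linear_combination -u1.2 * hu
  have e22 : d * u2.2 = NB u u2 * u.1 - NA u u2 * u.2 := by
    simp only [NA, NB]; linear_combination -u2.2 * hu
  apply Prod.ext
  · apply mul_left_cancel₀ hd
    rw [e11, e12, hA, hB]
  · apply mul_left_cancel₀ hd
    rw [e21, e22, hA, hB]

noncomputable def prs (B : Finset (F × F)) (e : F × F) : Finset ((F × F) × (F × F)) :=
  (B ×ˢ B).filter (fun p => dot e p.1 = dot e p.2)

lemma WB_expand (B : Finset (F × F)) (e : F × F) :
    WB B e = (∑ i : F, ((fib B e i).card : ℝ) ^ 2)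
      - (B.card : ℝ) ^ 2 / (Fintype.card F : ℝ) := by
  have hq : (0:ℝ) < (Fintype.card F : ℝ) := by exact_mod_cast Fintype.card_pos
  have hsum : ∑ i : F, ((fib B e i).card : ℝ) = (B.card : ℝ) := by
    rw [← Nat.cast_sum]
    exact_mod_cast congrArg (Nat.cast : ℕ → ℝ) (fib_sum B e)
  unfold WB
  have h1 : ∀ i ∈ (Finset.univ : Finset F),
      (((fib B e i).card : ℝ) - (B.card : ℝ) / (Fintype.card F : ℝ)) ^ 2
      = ((fib B e i).card : ℝ) ^ 2
        - (2 * ((B.card : ℝ) / (Fintype.card F : ℝ))) * ((fib B e i).card : ℝ)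
        + ((B.card : ℝ) / (Fintype.card F : ℝ)) ^ 2 := by
    intros; ring
  rw [Finset.sum_congr rfl h1, Finset.sum_add_distrib, Finset.sum_sub_distrib,
    ← Finset.mul_sum, Finset.sum_const, Finset.card_univ, nsmul_eq_mul, hsum]
  field_simp
  ring

lemma prs_card (B : Finset (F × F)) (e : F × F) :
    (prs B e).card = ∑ i : F, (fib B e i).card * (fib B e i).card := by
  rw [Finset.card_eq_sum_card_fiberwise (f := fun p => dot e p.1) (t := Finset.univ)
    (fun _ _ => Finset.mem_univ _)]
  refine Finset.sum_congr rfl (fun i _ => ?_)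
  rw [← Finset.card_product]
  congr 1
  ext ⟨p1, p2⟩
  simp only [prs, fib, Finset.mem_filter, Finset.mem_product]
  constructor
  · rintro ⟨⟨⟨hp1, hp2⟩, hdd⟩, hi⟩
    exact ⟨⟨hp1, hi⟩, hp2, by rw [← hdd, hi]⟩
  · rintro ⟨⟨hp1, hi1⟩, hp2, hi2⟩
    exact ⟨⟨⟨hp1, hp2⟩, by rw [hi1, hi2]⟩, hi1⟩

lemma diag_card (B : Finset (F × F)) :
    ((B ×ˢ B).filter (fun p => p.1 = p.2)).card = B.card := by
  symm
  apply Finset.card_bij (fun x _ => (x, x))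
  · intro x hx
    simp only [Finset.mem_filter, Finset.mem_product]
    simp [hx]
  · intro x _ y _ hxy
    exact congrArg Prod.fst hxy
  · rintro ⟨p1, p2⟩ hp
    simp only [Finset.mem_filter, Finset.mem_product] at hp
    exact ⟨p1, hp.1.1, by rw [hp.2]⟩

lemma prs_card_le (B : Finset (F × F)) (e : F × F) :
    (prs B e).card ≤ B.card
      + (((B ×ˢ B).filter (fun p => p.1 ≠ p.2)).filter
          (fun p => dot e p.1 = dot e p.2)).card := by
  rw [← Finset.card_filter_add_card_filter_not
    (s := prs B e) (p := fun p => p.1 = p.2)]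
  gcongr
  · calc ((prs B e).filter (fun p => p.1 = p.2)).card
        ≤ ((B ×ˢ B).filter (fun p => p.1 = p.2)).card := by
          apply Finset.card_le_card
          exact Finset.filter_subset_filter _ (Finset.filter_subset _ _)
      _ = B.card := diag_card B
  · intro p hp
    simp only [prs, Finset.mem_filter] at hp ⊢
    exact ⟨⟨hp.1.1, hp.2⟩, hp.1.2⟩

lemma dir_filter_card {a b : F × F} (hab : a ≠ b) :
    (Dir.filter (fun e => dot e a = dot e b)).card ≤ 1 := by
  rw [Finset.card_le_one]
  intro e he f hf
  simp only [Finset.mem_filter, Dir, Finset.mem_union, Finset.mem_image,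
    Finset.mem_singleton, Finset.mem_univ, true_and] at he hf
  obtain ⟨he1, he2⟩ := he
  obtain ⟨hf1, hf2⟩ := hf
  have hab' : ¬(a.1 = b.1 ∧ a.2 = b.2) := fun ⟨h1, h1'⟩ => hab (Prod.ext h1 h1')
  rcases he1 with ⟨t, rfl⟩ | rfl <;> rcases hf1 with ⟨t', rfl⟩ | rfl <;>
    simp only [dot] at he2 hf2
  · by_cases h22 : a.2 = b.2
    · exact absurd ⟨by linear_combination he2 - t * h22, h22⟩ hab'
    · have hz : (t - t') * (a.2 - b.2) = 0 := by linear_combination he2 - hf2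
      rcases mul_eq_zero.mp hz with h | h
      · have : t = t' := by linear_combination h
        rw [this]
      · exact absurd (by linear_combination h : a.2 = b.2) h22
  · exfalso
    apply hab'
    have h22 : a.2 = b.2 := by linear_combination hf2
    exact ⟨by linear_combination he2 - t * h22, h22⟩
  · exfalso
    apply hab'
    have h22 : a.2 = b.2 := by linear_combination he2
    exact ⟨by linear_combination hf2 - t' * h22, h22⟩
  · rfl

noncomputable def aniso : Finset (F × F) := Dir.filter (fun e => nrm e ≠ 0)

lemma aniso_card_le : (aniso : Finset (F × F)).card ≤ Fintype.card F + 1 :=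
  le_trans (Finset.card_filter_le _ _) (le_of_eq card_Dir)

lemma iso_card_le : ((Dir : Finset (F × F)).filter (fun e => nrm e = 0)).card ≤ 2 := by
  by_cases hex : ∃ t0 : F, t0 ^ 2 = -1
  · obtain ⟨t0, ht0⟩ := hex
    calc ((Dir : Finset (F × F)).filter (fun e => nrm e = 0)).card
        ≤ (insert ((1:F), t0) {((1:F), -t0)} : Finset (F × F)).card := by
          apply Finset.card_le_card
          intro e he
          simp only [Finset.mem_filter, Dir, Finset.mem_union, Finset.mem_image,
            Finset.mem_singleton, Finset.mem_univ, true_and] at he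
          obtain ⟨he1, he2⟩ := he
          rcases he1 with ⟨t, rfl⟩ | rfl
          · simp only [nrm] at he2
            have hz : (t - t0) * (t + t0) = 0 := by linear_combination he2 - ht0
            simp only [Finset.mem_insert, Finset.mem_singleton, Prod.mk.injEq]
            rcases mul_eq_zero.mp hz with h | h
            · exact Or.inl ⟨trivial, by linear_combination h⟩
            · exact Or.inr ⟨trivial, by linear_combination h⟩
          · exfalso
            simp only [nrm] at he2
            exact one_ne_zero (by linear_combination he2)
      _ ≤ 2 := by
          apply le_trans (Finset.card_insert_le _ _)
          simp
  · push_neg at hex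
    convert Nat.zero_le 2
    rw [Finset.card_eq_zero]
    apply Finset.filter_eq_empty_iff.mpr
    intro e he
    simp only [Dir, Finset.mem_union, Finset.mem_image, Finset.mem_singleton,
      Finset.mem_univ, true_and] at he
    rcases he with ⟨t, rfl⟩ | rfl
    · simp only [nrm]
      intro h0
      exact hex t (by linear_combination h0)
    · simp only [nrm]
      intro h0
      exact one_ne_zero (by linear_combination h0)

lemma aniso_card_ge : Fintype.card F + 1 ≤ (aniso : Finset (F × F)).card + 2 := by
  have h := Finset.card_filter_add_card_filter_not
    (s := (Dir : Finset (F × F))) (p := fun e => nrm e = 0)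
  rw [card_Dir] at h
  have h2 : ((Dir : Finset (F × F)).filter (fun e => ¬ nrm e = 0)) = aniso := rfl
  rw [h2] at h
  have h3 := iso_card_le (F := F)
  omega

lemma E2 (B : Finset (F × F)) (hq2 : 2 ≤ Fintype.card F) :
    ∑ e ∈ (aniso : Finset (F × F)), WB B e
      ≤ 2 * ((Fintype.card F : ℝ) - 1) * (B.card : ℝ) := by
  have hq0 : (0:ℝ) < (Fintype.card F : ℝ) := by exact_mod_cast Fintype.card_pos
  set q : ℝ := (Fintype.card F : ℝ) with hqdef
  set r : ℝ := (B.card : ℝ) with hrdef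
  set OD : Finset ((F × F) × (F × F)) := (B ×ˢ B).filter (fun p => p.1 ≠ p.2) with hOD
  have hoff : ∑ e ∈ (aniso : Finset (F × F)),
      (OD.filter (fun p => dot e p.1 = dot e p.2)).card ≤ OD.card := by
    calc ∑ e ∈ (aniso : Finset (F × F)), (OD.filter (fun p => dot e p.1 = dot e p.2)).card
        = ∑ e ∈ (aniso : Finset (F × F)), ∑ p ∈ OD,
            (if dot e p.1 = dot e p.2 then 1 else 0) :=
          Finset.sum_congr rfl (fun e _ => Finset.card_filter _ _)
      _ = ∑ p ∈ OD, ∑ e ∈ (aniso : Finset (F × F)),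
            (if dot e p.1 = dot e p.2 then 1 else 0) := Finset.sum_comm
      _ = ∑ p ∈ OD, ((aniso : Finset (F × F)).filter
            (fun e => dot e p.1 = dot e p.2)).card :=
          Finset.sum_congr rfl (fun p _ => (Finset.card_filter _ _).symm)
      _ ≤ ∑ _p ∈ OD, 1 := by
          apply Finset.sum_le_sum
          intro p hp
          have hne : p.1 ≠ p.2 := by
            rw [hOD] at hp
            exact (Finset.mem_filter.mp hp).2
          calc ((aniso : Finset (F × F)).filter (fun e => dot e p.1 = dot e p.2)).card
              ≤ ((Dir : Finset (F × F)).filter (fun e => dot e p.1 = dot e p.2)).card :=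
                Finset.card_le_card
                  (Finset.filter_subset_filter _ (Finset.filter_subset _ _))
            _ ≤ 1 := dir_filter_card hne
      _ = OD.card := by rw [Finset.sum_const, smul_eq_mul, mul_one]
  have hODcard : ((OD.card : ℕ) : ℝ) = r ^ 2 - r := by
    have h := Finset.card_filter_add_card_filter_not
      (s := B ×ˢ B) (p := fun p => p.1 = p.2)
    rw [diag_card] at h
    have h2 : ((B ×ˢ B).filter (fun p => ¬ p.1 = p.2)) = OD := rfl
    rw [h2, Finset.card_product] at h
    have h3 := congrArg (Nat.cast : ℕ → ℝ) h
    push_cast at h3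
    rw [← hrdef] at h3
    rw [sq]
    linarith
  have hper : ∀ e ∈ (aniso : Finset (F × F)), WB B e ≤ r - r ^ 2 / q
      + ((OD.filter (fun p => dot e p.1 = dot e p.2)).card : ℝ) := by
    intro e _
    rw [WB_expand]
    have h1 : (∑ i : F, ((fib B e i).card : ℝ) ^ 2) = ((prs B e).card : ℝ) := by
      rw [prs_card]
      push_cast
      exact Finset.sum_congr rfl (fun i _ => by ring)
    rw [h1]
    have h2 := prs_card_le B e
    have h3 : (((B ×ˢ B).filter (fun p => p.1 ≠ p.2)).filter
        (fun p => dot e p.1 = dot e p.2)) = OD.filter (fun p => dot e p.1 = dot e p.2) := rfl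
    rw [h3] at h2
    have h4 : ((prs B e).card : ℝ) ≤ r
        + ((OD.filter (fun p => dot e p.1 = dot e p.2)).card : ℝ) := by
      rw [hrdef]
      exact_mod_cast h2
    linarith
  have hsum : ∑ e ∈ (aniso : Finset (F × F)), WB B e
      ≤ ((aniso : Finset (F × F)).card : ℝ) * (r - r ^ 2 / q) + (r ^ 2 - r) := by
    calc ∑ e ∈ (aniso : Finset (F × F)), WB B e
        ≤ ∑ e ∈ (aniso : Finset (F × F)), (r - r ^ 2 / q
            + ((OD.filter (fun p => dot e p.1 = dot e p.2)).card : ℝ)) :=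
          Finset.sum_le_sum hper
      _ = ((aniso : Finset (F × F)).card : ℝ) * (r - r ^ 2 / q)
            + ∑ e ∈ (aniso : Finset (F × F)),
                ((OD.filter (fun p => dot e p.1 = dot e p.2)).card : ℝ) := by
          rw [Finset.sum_add_distrib, Finset.sum_const, nsmul_eq_mul]
      _ ≤ _ := by
          have h5 : ∑ e ∈ (aniso : Finset (F × F)),
              ((OD.filter (fun p => dot e p.1 = dot e p.2)).card : ℝ) ≤ ((OD.card : ℕ) : ℝ) := by
            rw [← Nat.cast_sum]
            exact_mod_cast hoff
          rw [hODcard] at h5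
          linarith
  have hk1 : ((aniso : Finset (F × F)).card : ℝ) ≤ q + 1 := by
    rw [hqdef]
    exact_mod_cast aniso_card_le
  have hk2 : q - 1 ≤ ((aniso : Finset (F × F)).card : ℝ) := by
    have h6 := aniso_card_ge (F := F)
    have h7 : (Fintype.card F : ℝ) + 1 ≤ ((aniso : Finset (F × F)).card : ℝ) + 2 := by
      exact_mod_cast h6
    rw [hqdef]
    linarith
  have hr0 : (0:ℝ) ≤ r := by rw [hrdef]; exact Nat.cast_nonneg _
  have hrq : r ≤ q ^ 2 := by
    have h8 := Finset.card_le_univ B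
    rw [Fintype.card_prod] at h8
    rw [hrdef, hqdef, sq]
    exact_mod_cast h8
  have hv : r ^ 2 / q * q = r ^ 2 := div_mul_cancel₀ _ (ne_of_gt hq0)
  have hv0 : (0:ℝ) ≤ r ^ 2 / q := div_nonneg (sq_nonneg _) hq0.le
  have hq2' : (2:ℝ) ≤ q := by rw [hqdef]; exact_mod_cast hq2
  rcases le_or_gt r q with hcase | hcase
  · have hvr : r ^ 2 / q ≤ r := by
      rw [div_le_iff₀ hq0]
      nlinarith
    have hk : ((aniso : Finset (F × F)).card : ℝ) * (r - r ^ 2 / q)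
        ≤ (q + 1) * (r - r ^ 2 / q) :=
      mul_le_mul_of_nonneg_right hk1 (by linarith)
    linarith [hsum, hk, hv, hv0, mul_nonneg hr0 (sub_nonneg.mpr hq2')]
  · have hvr : r ≤ r ^ 2 / q := by
      rw [le_div_iff₀ hq0]
      nlinarith
    have hk : ((aniso : Finset (F × F)).card : ℝ) * (r - r ^ 2 / q)
        ≤ (q - 1) * (r - r ^ 2 / q) := by
      nlinarith [mul_nonneg (sub_nonneg.mpr hk2) (sub_nonneg.mpr hvr)]
    have hvq : r ^ 2 / q ≤ q * r := by
      rw [div_le_iff₀ hq0]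
      nlinarith
    linarith [hsum, hk, hv, hvq]

lemma err_u (d : F) (P : Set (F × F)) (h2 : (2:F) ≠ 0) (hd : d ≠ 0)
    (hq2 : 2 ≤ Fintype.card F) (u : F × F) (hu : nrm u = d) :
    ∑ u' ∈ Cf d, WB (Af P u) (nvec d u u')
      ≤ 2 * ((Fintype.card F : ℝ) - 1) * ((Af P u).card : ℝ) := by
  have hmem : ∀ u' ∈ (Cf d : Finset (F × F)), nrm u' = d := by
    intro u' hu'
    simp only [Cf, Finset.mem_filter, Finset.mem_univ, true_and] at hu'
    exact hu'
  have step1 : ∑ u' ∈ Cf d, WB (Af P u) (nvec d u u')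
      = ∑ u' ∈ Cf d, WB (Af P u) (nrmz (nvec d u u')) :=
    Finset.sum_congr rfl (fun u' hu' =>
      (WB_nrmz _ _ (nvec_ne_zero d h2 hd u u' hu (hmem u' hu'))).symm)
  rw [step1]
  have hinj : ∀ x ∈ (Cf d : Finset (F × F)), ∀ y ∈ (Cf d : Finset (F × F)),
      nrmz (nvec d u x) = nrmz (nvec d u y) → x = y := by
    intro x hx y hy hxy
    exact nvec_inj d h2 hd u x y hu (hmem x hx) (hmem y hy) hxy
  rw [← Finset.sum_image (s := Cf d) (f := fun e => WB (Af P u) e)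
    (g := fun u' => nrmz (nvec d u u')) hinj]
  refine le_trans (Finset.sum_le_sum_of_subset_of_nonneg ?_ ?_) (E2 (Af P u) hq2)
  · intro e he
    simp only [Finset.mem_image] at he
    obtain ⟨u', hu', rfl⟩ := he
    simp only [aniso, Finset.mem_filter]
    exact ⟨nrmz_mem_Dir _, nrm_nrmz_ne _ (nrm_nvec_ne d h2 hd u u' hu (hmem u' hu'))⟩
  · intro e _ _
    exact WB_nonneg _ _

end Counting

end FDE

attribute [local instance] Classical.propDecidable

/-- For `d ≠ 0`, `|Q'_d(P)| ≤ |Π_d(P)|²/q + 2(q−1)·|Π_d(P)|`. -/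
theorem fixed_distance_energy (F : Type) [Field F] [Fintype F]
    (hchar : 2 < ringChar F) (P : Set (F × F)) (d : F) (hd : d ≠ 0) :
    ((Qd P d).ncard : ℝ) ≤
      ((Pid P d).ncard : ℝ) ^ 2 / (Fintype.card F : ℝ) +
        2 * ((Fintype.card F : ℝ) - 1) * ((Pid P d).ncard : ℝ) := by
  have h2 : (2 : F) ≠ 0 := by
    intro h
    have h' : ((2:ℕ) : F) = 0 := by exact_mod_cast h
    have hdvd := (CharP.cast_eq_zero_iff F (ringChar F) 2).mp h'
    have hle := Nat.le_of_dvd (by norm_num) hdvd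
    omega
  have hq2 : 2 ≤ Fintype.card F := Fintype.one_lt_card
  have hT : ((Pid P d).ncard : ℝ) = ∑ u ∈ FDE.Cf d, ((FDE.Af P u).card : ℝ) := by
    rw [FDE.Pid_eq_coe P d, Set.ncard_coe_finset, FDE.Pidf_card_eq P d]
    push_cast
    rfl
  have hQ : ((Qd P d).ncard : ℝ) ≤ ((FDE.Sf P d).card : ℝ) := by
    exact_mod_cast FDE.Qd_ncard_le P d h2
  have hS := FDE.Sf_real_bound P d
  have herr : ∑ u ∈ FDE.Cf d, ∑ u' ∈ FDE.Cf d, FDE.WB (FDE.Af P u) (FDE.nvec d u u')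
      ≤ ∑ u ∈ FDE.Cf d, 2 * ((Fintype.card F : ℝ) - 1) * ((FDE.Af P u).card : ℝ) := by
    apply Finset.sum_le_sum
    intro u hu
    apply FDE.err_u d P h2 hd hq2 u
    simpa [FDE.Cf] using hu
  have hfinal : ∑ u ∈ FDE.Cf d, 2 * ((Fintype.card F : ℝ) - 1) * ((FDE.Af P u).card : ℝ)
      = 2 * ((Fintype.card F : ℝ) - 1) * ((Pid P d).ncard : ℝ) := by
    rw [hT, Finset.mul_sum]
  calc ((Qd P d).ncard : ℝ)
      ≤ ((FDE.Sf P d).card : ℝ) := hQ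
    _ ≤ (∑ u ∈ FDE.Cf d, ((FDE.Af P u).card : ℝ)) ^ 2 / (Fintype.card F : ℝ)
        + ∑ u ∈ FDE.Cf d, ∑ u' ∈ FDE.Cf d, FDE.WB (FDE.Af P u) (FDE.nvec d u u') := hS
    _ ≤ (∑ u ∈ FDE.Cf d, ((FDE.Af P u).card : ℝ)) ^ 2 / (Fintype.card F : ℝ)
        + ∑ u ∈ FDE.Cf d, 2 * ((Fintype.card F : ℝ) - 1) * ((FDE.Af P u).card : ℝ) := by
        linarith
    _ = ((Pid P d).ncard : ℝ) ^ 2 / (Fintype.card F : ℝ)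
        + 2 * ((Fintype.card F : ℝ) - 1) * ((Pid P d).ncard : ℝ) := by
        rw [hfinal, ← hT]
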